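/- Let B₁ be a real m×N matrix, B₂ a real m×M matrix with full column rank, H a real N×N matrix, α ∈ ℝ and w ∈ ℝᵐ. Set P = B₂(B₂ᵀB₂)⁻¹B₂ᵀ, Q = I − P, A = Q·B₁ and b = Q·w. Then the pair (σ, z) ∈ ℝᴺ×ℝᴹ satisfies the block linear system with first row (B₁ᵀB₁ + αH)σ + B₁ᵀB₂ z = B₁ᵀw and second row B₂ᵀB₁ σ + B₂ᵀB₂ z = B₂ᵀw if and only if σ satisfies the decoupled equation (AᵀA + αH)σ = Aᵀb and z = (B₂ᵀB₂)⁻¹B₂ᵀ(w − B₁σ). -/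
import Mathlib

open Matrix


/-- Decoupling of the block linear system.  With `B₁ : m×N`,
`B₂ : m×M` of full column rank, `H : N×N`, `α ∈ ℝ`, `w ∈ ℝᵐ`,
`P = B₂(B₂ᵀB₂)⁻¹B₂ᵀ`, `Q = I − P`, `A = Q·B₁`, `b = Q·w`, the pair `(σ, z)`
satisfies
  `(B₁ᵀB₁ + αH)σ + B₁ᵀB₂ z = B₁ᵀw` and `B₂ᵀB₁ σ + B₂ᵀB₂ z = B₂ᵀw`
if and only if
  `(AᵀA + αH)σ = Aᵀb` and `z = (B₂ᵀB₂)⁻¹B₂ᵀ(w − B₁σ)`. -/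
theorem stmt_3 (m N M : ℕ) (hm : 0 < m) (hN : 0 < N) (hM : 0 < M)
    (B₁ : Matrix (Fin m) (Fin N) ℝ) (B₂ : Matrix (Fin m) (Fin M) ℝ)
    (hinj : Function.Injective B₂.mulVec)
    (H : Matrix (Fin N) (Fin N) ℝ) (α : ℝ) (w : Fin m → ℝ)
    (P Q : Matrix (Fin m) (Fin m) ℝ) (A : Matrix (Fin m) (Fin N) ℝ) (b : Fin m → ℝ)
    (hP : P = B₂ * (B₂.transpose * B₂)⁻¹ * B₂.transpose)
    (hQ : Q = 1 - P) (hA : A = Q * B₁) (hb : b = Q.mulVec w)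
    (σ : Fin N → ℝ) (z : Fin M → ℝ) :
    ((B₁.transpose * B₁ + α • H).mulVec σ + (B₁.transpose * B₂).mulVec z =
        B₁.transpose.mulVec w ∧
      (B₂.transpose * B₁).mulVec σ + (B₂.transpose * B₂).mulVec z =
        B₂.transpose.mulVec w) ↔
    ((A.transpose * A + α • H).mulVec σ = A.transpose.mulVec b ∧
      z = ((B₂.transpose * B₂)⁻¹ * B₂.transpose).mulVec (w - B₁.mulVec σ)) := by
  set G := B₂.transpose * B₂ with hGdef
  -- G is invertible
  have hGker : ∀ x : Fin M → ℝ, G.mulVec x = 0 → x = 0 := by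
    intro x hx
    have hd : B₂.mulVec x ⬝ᵥ B₂.mulVec x = 0 := by
      have h1 : x ⬝ᵥ G.mulVec x = 0 := by rw [hx]; simp
      rwa [hGdef, ← Matrix.mulVec_mulVec, Matrix.dotProduct_mulVec,
        Matrix.vecMul_transpose] at h1
    have h0 : B₂.mulVec x = 0 := dotProduct_self_eq_zero.mp hd
    exact hinj (h0.trans (Matrix.mulVec_zero B₂).symm)
  have hGinj : Function.Injective G.mulVec := by
    intro x y hxy
    have hs : G.mulVec (x - y) = 0 := by
      rw [Matrix.mulVec_sub, hxy, sub_self]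
    exact sub_eq_zero.mp (hGker _ hs)
  have hGunit : IsUnit G := Matrix.mulVec_injective_iff_isUnit.mp hGinj
  have hdet : IsUnit G.det := (Matrix.isUnit_iff_isUnit_det G).mp hGunit
  have hinvG : G⁻¹ * G = 1 := Matrix.nonsing_inv_mul G hdet
  have hGinv : G * G⁻¹ = 1 := Matrix.mul_nonsing_inv G hdet
  have hGT : Gᵀ = G := by rw [hGdef, Matrix.transpose_mul, Matrix.transpose_transpose]
  have hGinvT : (G⁻¹)ᵀ = G⁻¹ := by rw [Matrix.transpose_nonsing_inv, hGT]
  -- key projector identities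
  have hPT : Pᵀ = P := by
    rw [hP]
    simp [Matrix.transpose_mul, hGinvT, Matrix.mul_assoc]
  have hPB₂ : P * B₂ = B₂ := by
    simp only [hP, Matrix.mul_assoc]
    rw [← hGdef, hinvG, Matrix.mul_one]
  have hPP : P * P = P := by
    simp only [hP, Matrix.mul_assoc]
    rw [← Matrix.mul_assoc B₂ᵀ B₂, ← hGdef, ← Matrix.mul_assoc G G⁻¹, hGinv, Matrix.one_mul]
  have hQT : Qᵀ = Q := by rw [hQ, Matrix.transpose_sub, Matrix.transpose_one, hPT]
  have hQQ : Q * Q = Q := by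
    rw [hQ, Matrix.sub_mul, Matrix.mul_sub, Matrix.mul_sub, hPP]
    simp only [Matrix.one_mul, Matrix.mul_one]
    abel
  have hATA : Aᵀ * A = B₁ᵀ * Q * B₁ := by
    rw [hA, Matrix.transpose_mul, hQT, Matrix.mul_assoc, ← Matrix.mul_assoc Q, hQQ,
      ← Matrix.mul_assoc]
  have hATb : Aᵀ.mulVec b = (B₁ᵀ * Q).mulVec w := by
    rw [hA, hb, Matrix.transpose_mul, hQT, Matrix.mulVec_mulVec, Matrix.mul_assoc, hQQ]
  have hQw : (B₁ᵀ * Q).mulVec w = B₁ᵀ.mulVec w - (B₁ᵀ * P).mulVec w := by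
    rw [hQ, Matrix.mul_sub, Matrix.mul_one, Matrix.sub_mulVec]
  have hQB : (B₁ᵀ * Q * B₁).mulVec σ
      = (B₁ᵀ * B₁).mulVec σ - (B₁ᵀ * P * B₁).mulVec σ := by
    rw [hQ, Matrix.mul_sub, Matrix.mul_one, Matrix.sub_mul, Matrix.sub_mulVec]
  have hB₂TP : B₂ᵀ * P = B₂ᵀ := by
    rw [← hPT, ← Matrix.transpose_mul, hPB₂]
  constructor
  · rintro ⟨h1, h2⟩
    have hz : G.mulVec z = B₂ᵀ.mulVec (w - B₁.mulVec σ) := by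
      rw [Matrix.mulVec_sub, Matrix.mulVec_mulVec, eq_sub_iff_add_eq, add_comm]
      exact h2
    have hzf : z = (G⁻¹ * B₂ᵀ).mulVec (w - B₁.mulVec σ) := by
      calc z = (G⁻¹ * G).mulVec z := by rw [hinvG, Matrix.one_mulVec]
      _ = G⁻¹.mulVec (G.mulVec z) := by rw [Matrix.mulVec_mulVec]
      _ = G⁻¹.mulVec (B₂ᵀ.mulVec (w - B₁.mulVec σ)) := by rw [hz]
      _ = (G⁻¹ * B₂ᵀ).mulVec (w - B₁.mulVec σ) := by rw [Matrix.mulVec_mulVec]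
    refine ⟨?_, hzf⟩
    have hB₂z : B₂.mulVec z = P.mulVec (w - B₁.mulVec σ) := by
      rw [hzf, Matrix.mulVec_mulVec, ← Matrix.mul_assoc, ← hP]
    have hBz : (B₁ᵀ * B₂).mulVec z
        = (B₁ᵀ * P).mulVec w - (B₁ᵀ * P * B₁).mulVec σ := by
      rw [← Matrix.mulVec_mulVec, hB₂z]
      simp only [Matrix.mulVec_sub, Matrix.mulVec_mulVec, Matrix.mul_assoc]
    rw [hBz, Matrix.add_mulVec] at h1
    rw [Matrix.add_mulVec, hATA, hATb, hQw, hQB]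
    linear_combination (norm := abel) h1
  · rintro ⟨h1, hzf⟩
    have hB₂z : B₂.mulVec z = P.mulVec (w - B₁.mulVec σ) := by
      rw [hzf, Matrix.mulVec_mulVec, ← Matrix.mul_assoc, ← hP]
    constructor
    · rw [Matrix.add_mulVec, hATA, hATb, hQw, hQB] at h1
      have hBz : (B₁ᵀ * B₂).mulVec z
          = (B₁ᵀ * P).mulVec w - (B₁ᵀ * P * B₁).mulVec σ := by
        rw [← Matrix.mulVec_mulVec, hB₂z]
        simp only [Matrix.mulVec_sub, Matrix.mulVec_mulVec, Matrix.mul_assoc]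
      rw [Matrix.add_mulVec, hBz]
      linear_combination (norm := abel) h1
    · have hBz : (B₂ᵀ * B₂).mulVec z = B₂ᵀ.mulVec (w - B₁.mulVec σ) := by
        rw [← Matrix.mulVec_mulVec, hB₂z, Matrix.mulVec_mulVec, hB₂TP]
      rw [hBz, Matrix.mulVec_sub, Matrix.mulVec_mulVec]
      abel
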